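/- Let K_1, K_2, K_3 be pairwise distinct (k+1)-element subsets of {1, …, n} such that K_1 is not contained in K_2 ∪ K_3. Then D_{K_1} ∩ D_{K_2} ∩ D_{K_3} has codimension 3 in ℂ^n. -/

import Mathlib

open Module Submodule

/-- The subspace `D_J ⊆ ℂ^ι` of translation vectors `x` for which the translated
hyperplanes `{l i = x i}`, `i ∈ J`, have a common point. -/
noncomputable def DD {ι V : Type*} [AddCommGroup V] [Module ℂ V]
    (l : ι → Module.Dual ℂ V) (J : Finset ι) : Submodule ℂ (ι → ℂ) where
  carrier := {x | ∃ y : V, ∀ i ∈ J, x i = l i y}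
  add_mem' := by
    rintro a b ⟨y, hy⟩ ⟨z, hz⟩
    exact ⟨y + z, fun i hi => by simp [hy i hi, hz i hi]⟩
  zero_mem' := ⟨0, fun i _ => by simp⟩
  smul_mem' := by
    rintro c a ⟨y, hy⟩
    exact ⟨c • y, fun i hi => by simp [hy i hi]⟩


/-- The pi map of a linearly independent family of functionals is surjective. -/
lemma pi_surj_of_li {ι : Type*} [Fintype ι] {V : Type*} [AddCommGroup V] [Module ℂ V]
    {L : ι → Module.Dual ℂ V} (h : LinearIndependent ℂ L) :
    Function.Surjective (LinearMap.pi L) := by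
  classical
  rw [← LinearMap.range_eq_top]
  by_contra hs
  obtain ⟨φ, φ0, hker⟩ := (LinearMap.range (LinearMap.pi L)).exists_le_ker_of_lt_top
    (lt_top_iff_ne_top.2 hs)
  set c : ι → ℂ := fun i => φ (fun j => if i = j then 1 else 0) with hc
  have hrel : ∀ i, c i = 0 := by
    refine Fintype.linearIndependent_iff.1 h c ?_
    ext y
    have h0 : φ (LinearMap.pi L y) = 0 := hker ⟨y, rfl⟩
    rw [LinearMap.pi_apply_eq_sum_univ φ (LinearMap.pi L y)] at h0
    simpa [LinearMap.pi_apply, mul_comm] using h0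
  refine φ0 ?_
  refine LinearMap.ext fun x => ?_
  rw [LinearMap.pi_apply_eq_sum_univ φ x]
  refine Finset.sum_eq_zero fun i _ => ?_
  rw [show (φ fun j => if i = j then 1 else 0) = 0 from hrel i, smul_zero]

lemma exists_coeffs (k n : ℕ)
    (l : Fin n → Module.Dual ℂ (Fin k → ℂ))
    (hgen : ∀ S : Finset (Fin n), S.card = k → LinearIndependent ℂ (fun i : S => l i.1))
    (K : Finset (Fin n)) (hc : K.card = k + 1) :
    ∃ c : Fin n → ℂ, (∀ i, i ∉ K → c i = 0) ∧ (∀ i ∈ K, c i ≠ 0) ∧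
      ∀ y : Fin k → ℂ, ∑ i ∈ K, c i * l i y = 0 := by
  classical
  have hdim : Module.finrank ℂ (Module.Dual ℂ (Fin k → ℂ)) = k := by
    rw [Subspace.dual_finrank_eq]; simp
  have hdep : ¬ LinearIndependent ℂ (fun i : K => l i.1) := by
    intro h
    have := h.fintype_card_le_finrank
    rw [hdim, Fintype.card_coe, hc] at this
    omega
  obtain ⟨g, hg, i₁, hi₁⟩ := Fintype.not_linearIndependent_iff.1 hdep
  set c : Fin n → ℂ := fun i => if h : i ∈ K then g ⟨i, h⟩ else 0 with hcdef
  have hsum : ∑ i ∈ K, c i • l i = 0 := by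
    rw [← Finset.sum_attach K (fun i => c i • l i)]
    convert hg using 2 with i
    all_goals simp [hcdef]
  have hzero : ∀ i, i ∉ K → c i = 0 := fun i hi => by simp [hcdef, hi]
  have hne : ∀ i ∈ K, c i ≠ 0 := by
    intro i₀ hi₀ hc0
    have hScard : (K.erase i₀).card = k := by rw [Finset.card_erase_of_mem hi₀, hc]; omega
    have hli := hgen (K.erase i₀) hScard
    have hsum' : ∑ i ∈ K.erase i₀, c i • l i = 0 := by
      rw [← Finset.add_sum_erase K (fun i => c i • l i) hi₀, hc0, zero_smul, zero_add] at hsum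
      exact hsum
    have hall : ∀ i : (K.erase i₀ : Finset (Fin n)), c i.1 = 0 := by
      refine Fintype.linearIndependent_iff.1 hli (fun i => c i.1) ?_
      rw [← Finset.sum_attach (K.erase i₀) (fun i => c i • l i)] at hsum'
      exact hsum'
    have : ∀ i ∈ K, c i = 0 := by
      intro i hi
      by_cases h' : i = i₀
      · rwa [h']
      · exact hall ⟨i, Finset.mem_erase.2 ⟨h', hi⟩⟩
    exact hi₁ (by simpa [hcdef, i₁.2] using this i₁.1 i₁.2)
  refine ⟨c, hzero, hne, fun y => ?_⟩
  have := congrArg (fun f : Module.Dual ℂ (Fin k → ℂ) => f y) hsum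
  simpa using this

lemma mem_DD_iff (k n : ℕ)
    (l : Fin n → Module.Dual ℂ (Fin k → ℂ))
    (hgen : ∀ S : Finset (Fin n), S.card = k → LinearIndependent ℂ (fun i : S => l i.1))
    (K : Finset (Fin n)) (hc : K.card = k + 1)
    (c : Fin n → ℂ) (hne : ∀ i ∈ K, c i ≠ 0)
    (hrel : ∀ y : Fin k → ℂ, ∑ i ∈ K, c i * l i y = 0)
    (x : Fin n → ℂ) :
    x ∈ DD l K ↔ ∑ i ∈ K, c i * x i = 0 := by
  classical
  constructor
  · rintro ⟨y, hy⟩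
    rw [Finset.sum_congr rfl (fun i hi => by rw [hy i hi])]
    exact hrel y
  · intro hx
    have hKne : K.Nonempty := Finset.card_pos.1 (by omega)
    obtain ⟨i₀, hi₀⟩ := hKne
    have hScard : (K.erase i₀).card = k := by rw [Finset.card_erase_of_mem hi₀, hc]; omega
    have hli := hgen (K.erase i₀) hScard
    obtain ⟨y, hy⟩ := pi_surj_of_li hli (fun i : (K.erase i₀ : Finset (Fin n)) => x i.1)
    have hy' : ∀ i ∈ K.erase i₀, l i y = x i := by
      intro i hi
      exact congrFun hy ⟨i, hi⟩
    refine ⟨y, fun i hi => ?_⟩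
    by_cases h' : i = i₀
    · subst h'
      -- use the relation to deduce x i = l i y
      have h1 : c i * x i + ∑ j ∈ K.erase i, c j * x j = 0 := by
        rw [Finset.add_sum_erase K (fun j => c j * x j) hi]; exact hx
      have h2 : c i * l i y + ∑ j ∈ K.erase i, c j * l j y = 0 := by
        rw [Finset.add_sum_erase K (fun j => c j * l j y) hi]; exact hrel y
      have h3 : ∑ j ∈ K.erase i, c j * x j = ∑ j ∈ K.erase i, c j * l j y :=
        Finset.sum_congr rfl (fun j hj => by rw [hy' j hj])
      have : c i * x i = c i * l i y := by
        rw [h3] at h1; linear_combination h1 - h2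
      exact mul_left_cancel₀ (hne i hi) this
    · exact (hy' i (Finset.mem_erase.2 ⟨h', hi⟩)).symm

theorem stmt12 (k n : ℕ) (hk : 0 < k) (hkn : k < n)
    (l : Fin n → Module.Dual ℂ (Fin k → ℂ))
    (hgen : ∀ S : Finset (Fin n), S.card = k → LinearIndependent ℂ (fun i : S => l i.1))
    (K₁ K₂ K₃ : Finset (Fin n))
    (hne₁₂ : K₁ ≠ K₂) (hne₁₃ : K₁ ≠ K₃) (hne₂₃ : K₂ ≠ K₃)
    (hc₁ : K₁.card = k + 1) (hc₂ : K₂.card = k + 1) (hc₃ : K₃.card = k + 1)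
    (hnsub : ¬ K₁ ⊆ K₂ ∪ K₃) :
    Module.finrank ℂ ↥(DD l K₁ ⊓ DD l K₂ ⊓ DD l K₃) = n - 3 := by
  classical
  obtain ⟨c₁, hz₁, hn₁, hr₁⟩ := exists_coeffs k n l hgen K₁ hc₁
  obtain ⟨c₂, hz₂, hn₂, hr₂⟩ := exists_coeffs k n l hgen K₂ hc₂
  obtain ⟨c₃, hz₃, hn₃, hr₃⟩ := exists_coeffs k n l hgen K₃ hc₃
  -- choose separating coordinates
  obtain ⟨i₀, hi₀K, hi₀'⟩ := Finset.not_subset.1 hnsub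
  have hi₀₂ : i₀ ∉ K₂ := fun h => hi₀' (Finset.mem_union_left _ h)
  have hi₀₃ : i₀ ∉ K₃ := fun h => hi₀' (Finset.mem_union_right _ h)
  have h23 : ¬ K₂ ⊆ K₃ := fun h => hne₂₃ (Finset.eq_of_subset_of_card_le h (by omega))
  obtain ⟨j, hjK₂, hjK₃⟩ := Finset.not_subset.1 h23
  have h32 : ¬ K₃ ⊆ K₂ := fun h => hne₂₃ (Finset.eq_of_subset_of_card_le h (by omega)).symm
  obtain ⟨j', hj'K₃, hj'K₂⟩ := Finset.not_subset.1 h32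
  -- the three functionals, extended over all of Fin n
  set cc : Fin 3 → Fin n → ℂ := ![c₁, c₂, c₃] with hcc
  set α : Fin 3 → Module.Dual ℂ (Fin n → ℂ) := fun m =>
    { toFun := fun x => ∑ i, cc m i * x i
      map_add' := by intro a b; simp [mul_add, Finset.sum_add_distrib]
      map_smul' := by intro r a; simp [Finset.mul_sum]; ring_nf; simp [mul_assoc, mul_comm, mul_left_comm] } with hα
  set Φ : (Fin n → ℂ) →ₗ[ℂ] (Fin 3 → ℂ) := LinearMap.pi α with hΦ
  have hsum_eq : ∀ (c : Fin n → ℂ) (K : Finset (Fin n)), (∀ i, i ∉ K → c i = 0) →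
      ∀ x : Fin n → ℂ, ∑ i, c i * x i = ∑ i ∈ K, c i * x i := by
    intro c K hz x
    rw [← Finset.sum_subset (Finset.subset_univ K)]
    intro i _ hi
    rw [hz i hi, zero_mul]
  -- kernel of Φ is the triple intersection
  have hker : LinearMap.ker Φ = DD l K₁ ⊓ DD l K₂ ⊓ DD l K₃ := by
    ext x
    simp only [LinearMap.mem_ker, Submodule.mem_inf, hΦ]
    rw [mem_DD_iff k n l hgen K₁ hc₁ c₁ hn₁ hr₁ x,
        mem_DD_iff k n l hgen K₂ hc₂ c₂ hn₂ hr₂ x,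
        mem_DD_iff k n l hgen K₃ hc₃ c₃ hn₃ hr₃ x]
    have e₁ : α 0 x = ∑ i ∈ K₁, c₁ i * x i := hsum_eq c₁ K₁ hz₁ x
    have e₂ : α 1 x = ∑ i ∈ K₂, c₂ i * x i := hsum_eq c₂ K₂ hz₂ x
    have e₃ : α 2 x = ∑ i ∈ K₃, c₃ i * x i := hsum_eq c₃ K₃ hz₃ x
    constructor
    · intro h
      exact ⟨⟨e₁.symm.trans (congrFun h 0), e₂.symm.trans (congrFun h 1)⟩,
        e₃.symm.trans (congrFun h 2)⟩
    · rintro ⟨⟨g1, g2⟩, g3⟩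
      ext m
      show α m x = 0
      fin_cases m
      · exact e₁.trans g1
      · exact e₂.trans g2
      · exact e₃.trans g3
  -- Φ is surjective
  have hαsingle : ∀ (m : Fin 3) (i : Fin n) (v : ℂ), α m (Pi.single i v) = cc m i * v := by
    intro m i v
    simp only [hα, LinearMap.coe_mk, AddHom.coe_mk]
    rw [Finset.sum_eq_single i]
    · simp
    · intro b _ hb; simp [Pi.single_apply, hb]
    · intro h; exact absurd (Finset.mem_univ i) h
  have hij : i₀ ≠ j := fun h => hi₀₂ (h ▸ hjK₂)
  have hij' : i₀ ≠ j' := fun h => hi₀₃ (h ▸ hj'K₃)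
  have hjj' : j ≠ j' := fun h => hjK₃ (h ▸ hj'K₃)
  have hsurj : Function.Surjective Φ := by
    intro t
    -- solve triangular system
    set b : ℂ := t 1 / c₂ j with hb
    set d : ℂ := t 2 / c₃ j' with hd
    set a : ℂ := (t 0 - b * c₁ j - d * c₁ j') / c₁ i₀ with ha
    refine ⟨Pi.single i₀ a + Pi.single j b + Pi.single j' d, ?_⟩
    have hc₁i₀ := hn₁ i₀ hi₀K
    have hc₂j := hn₂ j hjK₂
    have hc₃j' := hn₃ j' hj'K₃
    ext m
    have hm : Φ (Pi.single i₀ a + Pi.single j b + Pi.single j' d) m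
        = cc m i₀ * a + cc m j * b + cc m j' * d := by
      simp only [hΦ, LinearMap.pi_apply, map_add, hαsingle]
    rw [hm]
    fin_cases m
    · show c₁ i₀ * a + c₁ j * b + c₁ j' * d = t 0
      have h1 : c₁ i₀ * a = t 0 - b * c₁ j - d * c₁ j' := by rw [ha]; field_simp
      linear_combination h1
    · show c₂ i₀ * a + c₂ j * b + c₂ j' * d = t 1
      rw [hz₂ i₀ hi₀₂, hz₂ j' hj'K₂]
      simp only [zero_mul, zero_add, add_zero]; rw [hb]; field_simp
    · show c₃ i₀ * a + c₃ j * b + c₃ j' * d = t 2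
      rw [hz₃ i₀ hi₀₃, hz₃ j hjK₃]
      simp only [zero_mul, zero_add, add_zero]; rw [hd]; field_simp
  -- rank-nullity
  have hrn := LinearMap.finrank_range_add_finrank_ker Φ
  rw [LinearMap.range_eq_top.2 hsurj] at hrn
  have hrange : Module.finrank ℂ (⊤ : Submodule ℂ (Fin 3 → ℂ)) = 3 := by
    rw [finrank_top]; simp
  rw [hrange, hker] at hrn
  have hdom : Module.finrank ℂ (Fin n → ℂ) = n := by simp
  rw [hdom] at hrn
  omega
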